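/- Let H ∈ (0,1), let k, p ≥ 1 be integers, let 0 < γ < H satisfy 2pk(H−γ) > 2k − 1, let 0 ≤ s < t ≤ 1, let C > 0, and let X be a jointly measurable stochastic process on [s,t] with values in ℝ^d such that E[|X_v − X_u|^{2pk}] ≤ C·|v−u|^{2Hpk} for all u, v ∈ [s,t]. Then there exists a constant c, depending only on C, k, p, γ, H, such that E[ ( N_{γ,p}(X) )^k ] ≤ c · (t−s)^{2kp(H−γ)}, where N_{γ,p}(X) = ∫_s^t ∫_s^t |X_v − X_u|^{2p} / |v−u|^{2γp+2} du dv. -/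

import Mathlib

open Real MeasureTheory ENNReal

/-- Power-mean (Hölder) inequality for the Lebesgue integral:
`(∫ f)^k ≤ μ(univ)^(k-1) * ∫ f^k` on a finite measure space. -/
lemma aux_pow_lintegral_le {α : Type*} [MeasurableSpace α] (μ : Measure α)
    (f : α → ℝ≥0∞) (hf : AEMeasurable f μ) (k : ℕ) (hk : 1 ≤ k) :
    (∫⁻ a, f a ∂μ) ^ k ≤ (μ Set.univ) ^ ((k : ℝ) - 1) * ∫⁻ a, (f a) ^ k ∂μ := by
  have hk0 : (k : ℝ) ≠ 0 := by positivity
  have hkinv : 0 ≤ 1 / (k : ℝ) := by positivity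
  have hkinv1 : 1 / (k : ℝ) ≤ 1 := by
    rw [div_le_one (by positivity)]; exact_mod_cast hk
  have h1 : ∫⁻ a, f a ∂μ ≤
      (∫⁻ a, (f a) ^ k ∂μ) ^ (1 / (k : ℝ)) * (μ Set.univ) ^ (1 - 1 / (k : ℝ)) := by
    have := ENNReal.lintegral_mul_norm_pow_le (μ := μ)
      (f := fun a => (f a) ^ k) (g := fun _ => (1 : ℝ≥0∞))
      (p := 1 / (k : ℝ)) (q := 1 - 1 / (k : ℝ))
      (hf.pow_const k) aemeasurable_const hkinv (by linarith) (by ring)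
    have heq : ∀ a, ((f a) ^ k : ℝ≥0∞) ^ (1 / (k : ℝ)) = f a := by
      intro a
      rw [← ENNReal.rpow_natCast (f a) k, ← ENNReal.rpow_mul,
        mul_one_div_cancel hk0, ENNReal.rpow_one]
    simp only [ENNReal.one_rpow, mul_one, lintegral_one] at this
    rwa [lintegral_congr heq] at this
  calc (∫⁻ a, f a ∂μ) ^ k
      ≤ ((∫⁻ a, (f a) ^ k ∂μ) ^ (1 / (k : ℝ)) * (μ Set.univ) ^ (1 - 1 / (k : ℝ))) ^ k :=
        pow_le_pow_left₀ (by positivity) h1 k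
    _ = (μ Set.univ) ^ ((k : ℝ) - 1) * ∫⁻ a, (f a) ^ k ∂μ := by
        rw [mul_pow, ← ENNReal.rpow_natCast ((∫⁻ a, (f a) ^ k ∂μ) ^ (1 / (k : ℝ))),
          ← ENNReal.rpow_natCast ((μ Set.univ) ^ (1 - 1 / (k : ℝ))),
          ← ENNReal.rpow_mul, ← ENNReal.rpow_mul, one_div_mul_cancel hk0,
          ENNReal.rpow_one]
        rw [mul_comm]
        congr 1
        congr 1
        field_simp

lemma aux_piece_right (β : ℝ) (hβ : -1 < β) (a b : ℝ) (hab : a ≤ b) :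
    ∫⁻ v in Set.Icc a b, ENNReal.ofReal (|v - a| ^ β) =
      ENNReal.ofReal ((b - a) ^ (β + 1) / (β + 1)) := by
  have hβ1 : (0:ℝ) < β + 1 := by linarith
  have h1 : ∫⁻ v in Set.Icc a b, ENNReal.ofReal (|v - a| ^ β)
      = ∫⁻ v in Set.Icc a b, ENNReal.ofReal ((v - a) ^ β) :=
    setLIntegral_congr_fun measurableSet_Icc (fun v hv => by
      rw [abs_of_nonneg (by linarith [hv.1] : (0:ℝ) ≤ v - a)])
  have hint : IntervalIntegrable (fun v => (v - a) ^ β) volume a b := by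
    have := (intervalIntegral.intervalIntegrable_rpow' (a := 0) (b := b - a) hβ).comp_sub_right a
    simpa using this
  have hint' : IntegrableOn (fun v => (v - a) ^ β) (Set.Icc a b) volume :=
    (intervalIntegrable_iff_integrableOn_Icc_of_le hab).mp hint
  have hnn : 0 ≤ᵐ[volume.restrict (Set.Icc a b)] fun v => (v - a) ^ β :=
    (ae_restrict_iff' measurableSet_Icc).2 <| ae_of_all _ fun v hv =>
      Real.rpow_nonneg (by linarith [hv.1]) β
  rw [h1, ← ofReal_integral_eq_lintegral_ofReal hint' hnn]
  congr 1
  have : ∫ v in Set.Icc a b, (v - a) ^ β = ∫ v in a..b, (v - a) ^ β := by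
    rw [intervalIntegral.integral_of_le hab, integral_Icc_eq_integral_Ioc]
  rw [this, intervalIntegral.integral_comp_sub_right (fun x => x ^ β) a, sub_self,
    integral_rpow (Or.inl hβ), Real.zero_rpow (by linarith : β + 1 ≠ 0), sub_zero]

lemma aux_piece_left (β : ℝ) (hβ : -1 < β) (a b : ℝ) (hab : a ≤ b) :
    ∫⁻ v in Set.Icc a b, ENNReal.ofReal (|v - b| ^ β) =
      ENNReal.ofReal ((b - a) ^ (β + 1) / (β + 1)) := by
  have hβ1 : (0:ℝ) < β + 1 := by linarith
  have h1 : ∫⁻ v in Set.Icc a b, ENNReal.ofReal (|v - b| ^ β)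
      = ∫⁻ v in Set.Icc a b, ENNReal.ofReal ((b - v) ^ β) :=
    setLIntegral_congr_fun measurableSet_Icc (fun v hv => by
      rw [abs_sub_comm, abs_of_nonneg (by linarith [hv.2] : (0:ℝ) ≤ b - v)])
  have hint : IntervalIntegrable (fun v => (b - v) ^ β) volume a b := by
    have := (intervalIntegral.intervalIntegrable_rpow' (a := b - a) (b := 0) hβ).comp_sub_left b
    simpa using this
  have hint' : IntegrableOn (fun v => (b - v) ^ β) (Set.Icc a b) volume :=
    (intervalIntegrable_iff_integrableOn_Icc_of_le hab).mp hint
  have hnn : 0 ≤ᵐ[volume.restrict (Set.Icc a b)] fun v => (b - v) ^ β :=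
    (ae_restrict_iff' measurableSet_Icc).2 <| ae_of_all _ fun v hv =>
      Real.rpow_nonneg (by linarith [hv.2]) β
  rw [h1, ← ofReal_integral_eq_lintegral_ofReal hint' hnn]
  congr 1
  have : ∫ v in Set.Icc a b, (b - v) ^ β = ∫ v in a..b, (b - v) ^ β := by
    rw [intervalIntegral.integral_of_le hab, integral_Icc_eq_integral_Ioc]
  rw [this, intervalIntegral.integral_comp_sub_left (fun x => x ^ β) b, sub_self,
    integral_rpow (Or.inl hβ), Real.zero_rpow (by linarith : β + 1 ≠ 0), sub_zero]

lemma aux_inner (β : ℝ) (hβ : -1 < β) (s t u : ℝ) (hu : u ∈ Set.Icc s t) :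
    ∫⁻ v in Set.Icc s t, ENNReal.ofReal (|v - u| ^ β) ≤
      ENNReal.ofReal (2 * ((t - s) ^ (β + 1) / (β + 1))) := by
  have hβ1 : (0:ℝ) < β + 1 := by linarith
  have hsub : Set.Icc s t ⊆ Set.Icc s u ∪ Set.Icc u t := by
    intro x hx
    rcases le_total x u with h | h
    · exact Or.inl ⟨hx.1, h⟩
    · exact Or.inr ⟨h, hx.2⟩
  have hmono : ∀ a b : ℝ, s ≤ a → a ≤ b → b ≤ t →
      (b - a) ^ (β + 1) / (β + 1) ≤ (t - s) ^ (β + 1) / (β + 1) := by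
    intro a b ha hab hb
    have h1 : (0:ℝ) ≤ b - a := by linarith
    have h2 : b - a ≤ t - s := by linarith
    gcongr
  calc ∫⁻ v in Set.Icc s t, ENNReal.ofReal (|v - u| ^ β)
      ≤ ∫⁻ v in Set.Icc s u ∪ Set.Icc u t, ENNReal.ofReal (|v - u| ^ β) :=
        lintegral_mono_set hsub
    _ ≤ (∫⁻ v in Set.Icc s u, ENNReal.ofReal (|v - u| ^ β)) +
        ∫⁻ v in Set.Icc u t, ENNReal.ofReal (|v - u| ^ β) := lintegral_union_le _ _ _
    _ = ENNReal.ofReal ((u - s) ^ (β + 1) / (β + 1)) +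
        ENNReal.ofReal ((t - u) ^ (β + 1) / (β + 1)) := by
        rw [aux_piece_left β hβ s u hu.1, aux_piece_right β hβ u t hu.2]
    _ ≤ ENNReal.ofReal ((t - s) ^ (β + 1) / (β + 1)) +
        ENNReal.ofReal ((t - s) ^ (β + 1) / (β + 1)) :=
        add_le_add (ENNReal.ofReal_le_ofReal (hmono s u le_rfl hu.1 hu.2))
          (ENNReal.ofReal_le_ofReal (hmono u t hu.1 hu.2 le_rfl))
    _ = ENNReal.ofReal (2 * ((t - s) ^ (β + 1) / (β + 1))) := by
        have hnn : (0:ℝ) ≤ (t - s) ^ (β + 1) / (β + 1) :=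
          div_nonneg (Real.rpow_nonneg (by linarith [hu.1, hu.2]) _) hβ1.le
        rw [← ENNReal.ofReal_add hnn hnn, two_mul]
set_option maxHeartbeats 1000000 in
theorem moment_bound_GRR_functional
    (H : ℝ) (hH1 : 0 < H) (hH2 : H < 1) (k p : ℕ) (hk : 1 ≤ k) (hp : 1 ≤ p)
    (γ : ℝ) (hγ0 : 0 < γ) (hγH : γ < H)
    (hcond : 2 * (p : ℝ) * k * (H - γ) > 2 * (k : ℝ) - 1)
    (C : ℝ) (hC : 0 < C) :
    ∃ c : ℝ, 0 < c ∧
      ∀ (Ω : Type) [MeasureSpace Ω], IsProbabilityMeasure (volume : Measure Ω) →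
        ∀ (d : ℕ) (s t : ℝ), 0 ≤ s → s < t → t ≤ 1 →
          ∀ X : ℝ → Ω → EuclideanSpace ℝ (Fin d),
            Measurable (Function.uncurry X) →
            (∀ u ∈ Set.Icc s t, ∀ v ∈ Set.Icc s t,
              (∫⁻ ω, ENNReal.ofReal (‖X v ω - X u ω‖ ^ (2 * p * k))) ≤
                ENNReal.ofReal (C * |v - u| ^ (2 * H * p * k))) →
            (∫⁻ ω, (∫⁻ u in Set.Icc s t, ∫⁻ v in Set.Icc s t,
                ENNReal.ofReal (‖X v ω - X u ω‖ ^ (2 * p) / |v - u| ^ (2 * γ * p + 2))) ^ k)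
              ≤ ENNReal.ofReal (c * (t - s) ^ (2 * (k : ℝ) * p * (H - γ))) := by
  have hk0 : (0:ℝ) < k := by exact_mod_cast hk
  have hp0 : (0:ℝ) < p := by exact_mod_cast hp
  set β : ℝ := 2 * p * k * (H - γ) - 2 * k with hβdef
  have hβ : -1 < β := by rw [hβdef]; linarith
  have hβ1 : (0:ℝ) < β + 1 := by linarith
  refine ⟨C * (2 / (β + 1)), by positivity, ?_⟩
  intro Ω _ hprob d s t hs hst ht X hX hmom
  haveI := hprob
  have hT : (0:ℝ) < t - s := by linarith
  set e : ℝ := 2 * γ * p + 2 with hedef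
  set A : Set ℝ := Set.Icc s t with hAdef
  set G : ℝ × ℝ → Ω → ℝ≥0∞ := fun z ω =>
    ENNReal.ofReal (‖X z.2 ω - X z.1 ω‖ ^ (2 * p) / |z.2 - z.1| ^ e) with hGdef
  set ν : Measure (ℝ × ℝ) := (volume.restrict A).prod (volume.restrict A) with hνdef
  -- measurability
  have hrpowm : ∀ r : ℝ, Measurable fun x : ℝ => x ^ r := fun r =>
    measurable_of_continuousOn_compl_singleton 0 fun x hx =>
      (Real.continuousAt_rpow_const x r (Or.inl (by simpa using hx))).continuousWithinAt
  have hGm : Measurable (fun q : (ℝ × ℝ) × Ω => G q.1 q.2) := by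
    apply Measurable.ennreal_ofReal
    apply Measurable.div
    · exact ((hX.comp ((measurable_fst.snd).prodMk measurable_snd)).sub
        (hX.comp ((measurable_fst.fst).prodMk measurable_snd))).norm.pow_const _
    · exact (hrpowm e).comp ((measurable_fst.snd.sub measurable_fst.fst).abs)
  have hGsec : ∀ ω : Ω, Measurable fun z : ℝ × ℝ => G z ω := by
    intro ω
    rw [hGdef]
    apply Measurable.ennreal_ofReal
    apply Measurable.div
    · exact ((hX.comp (measurable_snd.prodMk measurable_const)).sub
        (hX.comp (measurable_fst.prodMk measurable_const))).norm.pow_const _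
    · exact (hrpowm e).comp ((measurable_snd.sub measurable_fst).abs)
  have hνuniv : ν Set.univ = ENNReal.ofReal (t - s) * ENNReal.ofReal (t - s) := by
    rw [hνdef, ← Set.univ_prod_univ, Measure.prod_prod]
    simp [hAdef, Real.volume_Icc]
  have hνtop : (ν Set.univ) ^ ((k:ℝ) - 1) ≠ ⊤ := by
    refine ENNReal.rpow_ne_top_of_nonneg (by simp; linarith) ?_
    rw [hνuniv]
    exact ENNReal.mul_ne_top ENNReal.ofReal_ne_top ENNReal.ofReal_ne_top
  -- Step 0: rewrite the iterated integral as an integral over the product measure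
  have step0 : ∀ ω : Ω, (∫⁻ u in A, ∫⁻ v in A,
      ENNReal.ofReal (‖X v ω - X u ω‖ ^ (2 * p) / |v - u| ^ e)) = ∫⁻ z, G z ω ∂ν :=
    fun ω => (lintegral_prod _ (hGsec ω).aemeasurable).symm
  -- Step 1: Hölder pointwise in ω
  have step1 : ∀ ω, (∫⁻ z, G z ω ∂ν) ^ k ≤
      (ν Set.univ) ^ ((k:ℝ) - 1) * ∫⁻ z, (G z ω) ^ k ∂ν :=
    fun ω => aux_pow_lintegral_le ν _ (hGsec ω).aemeasurable k hk
  -- Step 3 (pointwise in z): moment bound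
  have step3 : ∀ z : ℝ × ℝ, z ∈ A ×ˢ A →
      (∫⁻ ω, (G z ω) ^ k) ≤ ENNReal.ofReal (C * |z.2 - z.1| ^ β) := by
    rintro ⟨u, v⟩ ⟨hu, hv⟩
    have hDinv : (0:ℝ) ≤ (|v - u| ^ (e * k))⁻¹ :=
      inv_nonneg.2 (Real.rpow_nonneg (abs_nonneg _) _)
    have hknorm : ∀ ω, (G (u, v) ω) ^ k =
        ENNReal.ofReal ((|v - u| ^ (e * k))⁻¹) *
          ENNReal.ofReal (‖X v ω - X u ω‖ ^ (2 * p * k)) := by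
      intro ω
      have hnn : (0:ℝ) ≤ ‖X v ω - X u ω‖ ^ (2 * p) / |v - u| ^ e :=
        div_nonneg (by positivity) (Real.rpow_nonneg (abs_nonneg _) _)
      rw [hGdef]
      rw [← ENNReal.ofReal_pow hnn, div_pow, ← pow_mul,
        show ((|v - u| ^ e) ^ k) = |v - u| ^ (e * k) from by
          rw [← Real.rpow_natCast (|v - u| ^ e) k, ← Real.rpow_mul (abs_nonneg _)],
        div_eq_mul_inv, mul_comm, ENNReal.ofReal_mul hDinv]
    calc (∫⁻ ω, (G (u, v) ω) ^ k)
        = ENNReal.ofReal ((|v - u| ^ (e * k))⁻¹) *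
            ∫⁻ ω, ENNReal.ofReal (‖X v ω - X u ω‖ ^ (2 * p * k)) := by
          rw [← lintegral_const_mul' _ _ ENNReal.ofReal_ne_top]
          exact lintegral_congr fun ω => hknorm ω
      _ ≤ ENNReal.ofReal ((|v - u| ^ (e * k))⁻¹) *
            ENNReal.ofReal (C * |v - u| ^ (2 * H * p * k)) :=
          mul_le_mul_of_nonneg_left (hmom u hu v hv) zero_le
      _ = ENNReal.ofReal (C * |v - u| ^ (2 * H * p * k) * (|v - u| ^ (e * k))⁻¹) := by
          rw [mul_comm, ← ENNReal.ofReal_mul (by positivity)]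
      _ ≤ ENNReal.ofReal (C * |v - u| ^ β) := by
          apply ENNReal.ofReal_le_ofReal
          rcases eq_or_ne (|v - u|) 0 with h0 | h0
          · rw [h0, Real.zero_rpow (by positivity : 2 * H * (p:ℝ) * k ≠ 0), mul_zero, zero_mul]
            exact mul_nonneg hC.le (Real.rpow_nonneg le_rfl β)
          · have hpos : 0 < |v - u| := lt_of_le_of_ne (abs_nonneg _) (Ne.symm h0)
            have hx : |v - u| ^ (2 * H * (p:ℝ) * k) * (|v - u| ^ (e * k))⁻¹
                = |v - u| ^ β := by
              rw [← div_eq_mul_inv, ← Real.rpow_sub hpos]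
              congr 1
              rw [hedef, hβdef]; push_cast; ring
            rw [mul_assoc, hx]
    -- Step 4 helper will be below
  -- measurability of the Φ function
  have hΦm : Measurable fun z : ℝ × ℝ => ENNReal.ofReal (C * |z.2 - z.1| ^ β) :=
    (((hrpowm β).comp ((measurable_snd.sub measurable_fst).abs)).const_mul C).ennreal_ofReal
  -- Step 4: integrate the bound
  have step4 : (∫⁻ z, ENNReal.ofReal (C * |z.2 - z.1| ^ β) ∂ν) ≤
      ENNReal.ofReal C * ENNReal.ofReal (2 * ((t - s) ^ (β + 1) / (β + 1))) *
        ENNReal.ofReal (t - s) := by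
    rw [hνdef, lintegral_prod _ hΦm.aemeasurable]
    have inner : ∀ u ∈ A, (∫⁻ v in A, ENNReal.ofReal (C * |v - u| ^ β)) ≤
        ENNReal.ofReal C * ENNReal.ofReal (2 * ((t - s) ^ (β + 1) / (β + 1))) := by
      intro u hu
      have : ∀ v : ℝ, ENNReal.ofReal (C * |v - u| ^ β) =
          ENNReal.ofReal C * ENNReal.ofReal (|v - u| ^ β) :=
        fun v => ENNReal.ofReal_mul hC.le
      calc (∫⁻ v in A, ENNReal.ofReal (C * |v - u| ^ β))
          = ENNReal.ofReal C * ∫⁻ v in A, ENNReal.ofReal (|v - u| ^ β) := by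
            rw [← lintegral_const_mul' _ _ ENNReal.ofReal_ne_top]
            exact lintegral_congr fun v => this v
        _ ≤ ENNReal.ofReal C * ENNReal.ofReal (2 * ((t - s) ^ (β + 1) / (β + 1))) :=
            mul_le_mul_of_nonneg_left (aux_inner β hβ s t u hu) zero_le
    calc (∫⁻ u in A, ∫⁻ v in A, ENNReal.ofReal (C * |v - u| ^ β))
        ≤ ∫⁻ _ in A, ENNReal.ofReal C *
            ENNReal.ofReal (2 * ((t - s) ^ (β + 1) / (β + 1))) :=
          setLIntegral_mono' measurableSet_Icc inner
      _ = ENNReal.ofReal C * ENNReal.ofReal (2 * ((t - s) ^ (β + 1) / (β + 1))) *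
            ENNReal.ofReal (t - s) := by
          rw [setLIntegral_const, hAdef, Real.volume_Icc]
  -- main chain
  have hswapmeas : AEMeasurable (Function.uncurry fun (ω : Ω) (z : ℝ × ℝ) => (G z ω) ^ k)
      ((volume : Measure Ω).prod ν) := by
    exact ((hGm.comp measurable_swap).pow_const k).aemeasurable
  calc (∫⁻ ω, (∫⁻ u in A, ∫⁻ v in A,
        ENNReal.ofReal (‖X v ω - X u ω‖ ^ (2 * p) / |v - u| ^ e)) ^ k)
      = ∫⁻ ω, (∫⁻ z, G z ω ∂ν) ^ k := lintegral_congr fun ω => by rw [step0 ω]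
    _ ≤ ∫⁻ ω, (ν Set.univ) ^ ((k:ℝ) - 1) * ∫⁻ z, (G z ω) ^ k ∂ν :=
        lintegral_mono step1
    _ = (ν Set.univ) ^ ((k:ℝ) - 1) * ∫⁻ ω, ∫⁻ z, (G z ω) ^ k ∂ν :=
        lintegral_const_mul' _ _ hνtop
    _ = (ν Set.univ) ^ ((k:ℝ) - 1) * ∫⁻ z, (∫⁻ ω, (G z ω) ^ k) ∂ν := by
        rw [lintegral_lintegral_swap hswapmeas]
    _ ≤ (ν Set.univ) ^ ((k:ℝ) - 1) * ∫⁻ z, ENNReal.ofReal (C * |z.2 - z.1| ^ β) ∂ν := by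
        refine mul_le_mul_of_nonneg_left ?_ zero_le
        rw [hνdef, Measure.prod_restrict]
        exact setLIntegral_mono' (measurableSet_Icc.prod measurableSet_Icc) step3
    _ ≤ (ν Set.univ) ^ ((k:ℝ) - 1) *
          (ENNReal.ofReal C * ENNReal.ofReal (2 * ((t - s) ^ (β + 1) / (β + 1))) *
            ENNReal.ofReal (t - s)) := mul_le_mul_of_nonneg_left step4 zero_le
    _ ≤ ENNReal.ofReal (C * (2 / (β + 1)) * (t - s) ^ (2 * (k:ℝ) * p * (H - γ))) := by
        rw [hνuniv, ← ENNReal.ofReal_mul hT.le,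
          ENNReal.ofReal_rpow_of_pos (mul_pos hT hT),
          ← ENNReal.ofReal_mul (by positivity),
          ← ENNReal.ofReal_mul (by positivity),
          ← ENNReal.ofReal_mul (by positivity)]
        apply ENNReal.ofReal_le_ofReal
        apply le_of_eq
        have h2 : (t - s) * (t - s) = (t - s) ^ ((2:ℕ):ℝ) := by
          rw [Real.rpow_natCast, sq]
        rw [h2, ← Real.rpow_mul hT.le]
        have hE : ((2:ℕ):ℝ) * ((k:ℝ) - 1) + ((β + 1) + 1) = 2 * (k:ℝ) * p * (H - γ) := by
          rw [hβdef]; push_cast; ring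
        rw [show (t - s) ^ (((2:ℕ):ℝ) * ((k:ℝ) - 1)) * (C * (2 * ((t - s) ^ (β + 1) / (β + 1))) * (t - s))
            = C * (2 / (β + 1)) * ((t - s) ^ (((2:ℕ):ℝ) * ((k:ℝ) - 1)) * ((t - s) ^ (β + 1) * (t - s) ^ (1:ℝ)))
            from by rw [Real.rpow_one]; ring,
          ← Real.rpow_add hT, ← Real.rpow_add hT, hE]
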